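/- If S has distribution Ψ_κ(μ, σ²), then E[S] = μ. -/

import Mathlib

open MeasureTheory Filter

lemma psi_aux_summable (A x : ℝ) :
    Summable (fun n : ℕ => (A + n) * x ^ n / (Nat.factorial n)) := by
  have h1 : Summable (fun n : ℕ => A * (x ^ n / (Nat.factorial n))) :=
    (Real.summable_pow_div_factorial x).mul_left A
  have h2 : Summable (fun n : ℕ => (n : ℝ) * x ^ n / (Nat.factorial n)) := by
    rw [← summable_nat_add_iff 1]
    refine ((Real.summable_pow_div_factorial x).mul_left x).congr fun n => ?_
    rw [Nat.factorial_succ]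
    have hn : ((Nat.factorial n : ℕ) : ℝ) ≠ 0 := by positivity
    push_cast
    field_simp
    ring
  exact (h1.add h2).congr fun n => by ring

/-- If `S` has distribution `Ψ_κ(μ, σ²)`, then `E[S] = μ`. -/
theorem psi_mean
    {Ω : Type*} [MeasurableSpace Ω] (P : Measure Ω) [IsProbabilityMeasure P]
    (S : Ω → ℤ) (hS : Measurable S)
    (μ σ2 : ℝ) (hσ : 0 < σ2) (κ : ℤ)
    (h1 : μ - σ2 < (κ : ℝ)) (h2 : (κ : ℝ) < μ + σ2 + 1)
    (hrec_up : ∀ j : ℤ, κ + 1 ≤ j →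
      (σ2 + (j : ℝ) - μ) * (P {ω | S ω = j}).toReal
        = σ2 * (P {ω | S ω = j - 1}).toReal)
    (hrec_mid : (σ2 + (κ : ℝ) - μ) * (P {ω | S ω = κ}).toReal
        = (σ2 + μ - (κ : ℝ) + 1) * (P {ω | S ω = κ - 1}).toReal)
    (hrec_down : ∀ j : ℤ, j ≤ κ - 1 →
      σ2 * (P {ω | S ω = j}).toReal
        = (σ2 + μ - (j : ℝ) + 1) * (P {ω | S ω = j - 1}).toReal) :
    ∫ ω, (S ω : ℝ) ∂P = μ := by
  set p : ℤ → ℝ := fun j => (P {ω | S ω = j}).toReal with hpdef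
  have hp0 : ∀ j, 0 ≤ p j := fun j => ENNReal.toReal_nonneg
  have hPne : ∀ j : ℤ, P {ω | S ω = j} ≠ ⊤ := fun j => measure_ne_top P _
  -- the singleton probabilities sum to 1
  have htsum : ∑' j : ℤ, P {ω | S ω = j} = 1 := by
    have hdisj : Pairwise (Function.onFun Disjoint fun j : ℤ => {ω | S ω = j}) := by
      intro i j hij
      simp only [Function.onFun, Set.disjoint_left]
      rintro ω (ha : S ω = i) (hb : S ω = j)
      exact hij (ha ▸ hb ▸ rfl)
    have hmeas : ∀ j : ℤ, MeasurableSet {ω | S ω = j} := fun j =>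
      hS (measurableSet_singleton j)
    rw [(measure_iUnion hdisj hmeas (μ := P)).symm]
    have huniv : (⋃ j : ℤ, {ω | S ω = j}) = Set.univ := by ext ω; simp
    rw [huniv, measure_univ]
  have hp_sum : Summable p :=
    ENNReal.summable_toReal (by rw [htsum]; exact ENNReal.one_ne_top)
  have hp_tsum : ∑' j, p j = 1 := by
    have := ENNReal.tsum_toReal_eq hPne
    rw [hpdef, ← this, htsum, ENNReal.toReal_one]
  -- upward factorial bound
  have hup : ∀ n : ℕ, p (κ + n) ≤ p κ * σ2 ^ n / (Nat.factorial n) := by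
    intro n
    induction n with
    | zero => simp
    | succ n ih =>
      have hrec := hrec_up (κ + n + 1) (by omega)
      rw [show (κ + (n : ℤ) + 1) - 1 = κ + n from by ring] at hrec
      push_cast at hrec
      have hD : (0:ℝ) < σ2 + ((κ:ℝ) + n + 1) - μ := by linarith
      have hDn : ((n:ℝ) + 1) ≤ σ2 + ((κ:ℝ) + n + 1) - μ := by linarith
      have ha : p (κ + n + 1) = σ2 * p (κ + n) / (σ2 + ((κ:ℝ) + n + 1) - μ) := by
        rw [eq_div_iff hD.ne']
        linarith [hrec]
      have key : p (κ + n + 1) ≤ σ2 * (p κ * σ2 ^ n / (Nat.factorial n)) / ((n:ℝ) + 1) := by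
        rw [ha]; gcongr
      calc p (κ + ((n:ℕ)+1 : ℕ)) = p (κ + n + 1) := by norm_num; ring_nf
        _ ≤ σ2 * (p κ * σ2 ^ n / (Nat.factorial n)) / ((n:ℝ) + 1) := key
        _ = p κ * σ2 ^ (n+1) / (Nat.factorial (n+1)) := by
            rw [Nat.factorial_succ]
            have hfn : ((Nat.factorial n : ℕ) : ℝ) ≠ 0 := by positivity
            push_cast
            field_simp
            ring
  -- downward factorial bound
  have hdown : ∀ n : ℕ, p (κ - 1 - n) ≤ p (κ - 1) * σ2 ^ n / (Nat.factorial n) := by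
    intro n
    induction n with
    | zero => simp
    | succ n ih =>
      have hrec := hrec_down (κ - 1 - n) (by omega)
      push_cast at hrec
      have hD : (0:ℝ) < σ2 + μ - ((κ:ℝ) - 1 - n) + 1 := by linarith
      have hDn : ((n:ℝ) + 1) ≤ σ2 + μ - ((κ:ℝ) - 1 - n) + 1 := by linarith
      have ha : p (κ - 1 - n - 1) = σ2 * p (κ - 1 - n) / (σ2 + μ - ((κ:ℝ) - 1 - n) + 1) := by
        rw [eq_div_iff hD.ne']
        linarith [hrec]
      have key : p (κ - 1 - n - 1)
          ≤ σ2 * (p (κ - 1) * σ2 ^ n / (Nat.factorial n)) / ((n:ℝ) + 1) := by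
        rw [ha]; gcongr
      calc p (κ - 1 - ((n:ℕ)+1 : ℕ)) = p (κ - 1 - n - 1) := by norm_num; ring_nf
        _ ≤ σ2 * (p (κ - 1) * σ2 ^ n / (Nat.factorial n)) / ((n:ℝ) + 1) := key
        _ = p (κ - 1) * σ2 ^ (n+1) / (Nat.factorial (n+1)) := by
            rw [Nat.factorial_succ]
            have hfn : ((Nat.factorial n : ℕ) : ℝ) ≠ 0 := by positivity
            push_cast
            field_simp
            ring
  -- summability of (|j| + |μ|) * p j
  set G : ℤ → ℝ := fun j => (|(j:ℝ)| + |μ|) * p j with hGdef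
  have hG0 : ∀ j, 0 ≤ G j := fun j =>
    mul_nonneg (add_nonneg (abs_nonneg _) (abs_nonneg _)) (hp0 j)
  have hGup : Summable (fun n : ℕ => G (κ + n)) := by
    refine Summable.of_nonneg_of_le (fun n => hG0 _)
      (f := fun n => p κ * ((|(κ:ℝ)| + |μ| + n) * σ2 ^ n / (Nat.factorial n))) ?_
      ((psi_aux_summable (|(κ:ℝ)| + |μ|) σ2).mul_left (p κ))
    intro n
    have hb1 : |((κ + n : ℤ) : ℝ)| + |μ| ≤ |(κ:ℝ)| + |μ| + n := by
      push_cast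
      have := abs_add_le (κ:ℝ) (n:ℝ)
      rw [abs_of_nonneg (by positivity : (0:ℝ) ≤ (n:ℝ))] at this
      linarith
    calc G (κ + n) = (|((κ + n : ℤ) : ℝ)| + |μ|) * p (κ + n) := rfl
      _ ≤ (|(κ:ℝ)| + |μ| + n) * (p κ * σ2 ^ n / (Nat.factorial n)) := by
          apply mul_le_mul hb1 (hup n) (hp0 _)
          positivity
      _ = p κ * ((|(κ:ℝ)| + |μ| + n) * σ2 ^ n / (Nat.factorial n)) := by ring
  have hGdown : Summable (fun n : ℕ => G (κ - 1 - n)) := by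
    refine Summable.of_nonneg_of_le (fun n => hG0 _)
      (f := fun n => p (κ-1) * ((|(κ:ℝ)| + 1 + |μ| + n) * σ2 ^ n / (Nat.factorial n))) ?_
      ((psi_aux_summable (|(κ:ℝ)| + 1 + |μ|) σ2).mul_left (p (κ-1)))
    intro n
    have hb1 : |((κ - 1 - n : ℤ) : ℝ)| + |μ| ≤ |(κ:ℝ)| + 1 + |μ| + n := by
      push_cast
      have h3 := le_abs_self (κ:ℝ)
      have h4 := neg_abs_le (κ:ℝ)
      have h5 : |(κ:ℝ) - 1 - n| ≤ |(κ:ℝ)| + 1 + n := by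
        rw [abs_le]
        constructor <;> [nlinarith [Nat.cast_nonneg (α := ℝ) n]; nlinarith [Nat.cast_nonneg (α := ℝ) n]]
      linarith
    calc G (κ - 1 - n) = (|((κ - 1 - n : ℤ) : ℝ)| + |μ|) * p (κ - 1 - n) := rfl
      _ ≤ (|(κ:ℝ)| + 1 + |μ| + n) * (p (κ-1) * σ2 ^ n / (Nat.factorial n)) := by
          apply mul_le_mul hb1 (hdown n) (hp0 _)
          positivity
      _ = p (κ-1) * ((|(κ:ℝ)| + 1 + |μ| + n) * σ2 ^ n / (Nat.factorial n)) := by ring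
  have hGsum : Summable G := by
    apply Summable.of_nat_of_neg
    · -- Summable (fun n : ℕ => G n)
      rcases le_or_gt 0 κ with hk | hk
      · rw [← summable_nat_add_iff κ.toNat]
        exact hGup.congr fun n => by
          congr 1; omega
      · refine ((summable_nat_add_iff (-κ).toNat).2 hGup).congr fun n => ?_
        congr 1; omega
    · -- Summable (fun n : ℕ => G (-n))
      rcases le_or_gt κ 0 with hk | hk
      · rw [← summable_nat_add_iff (1-κ).toNat]
        exact hGdown.congr fun n => by
          congr 1; omega
      · refine ((summable_nat_add_iff (κ-1).toNat).2 hGdown).congr fun n => ?_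
        congr 1; omega
  -- summability of the centered first-moment sequence
  set q : ℤ → ℝ := fun j => ((j:ℝ) - μ) * p j with hqdef
  have hq_sum : Summable q := by
    apply Summable.of_norm
    refine Summable.of_nonneg_of_le (fun j => norm_nonneg _) (fun j => ?_) hGsum
    have : ‖q j‖ = |(j:ℝ) - μ| * p j := by
      rw [hqdef]; simp [abs_mul, abs_of_nonneg (hp0 j)]
    rw [this]
    exact mul_le_mul_of_nonneg_right (abs_sub _ _) (hp0 j)
  have habs : Summable (fun j : ℤ => |(j:ℝ)| * p j) := by
    refine Summable.of_nonneg_of_le (fun j => by positivity) (fun j => ?_) hGsum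
    apply mul_le_mul_of_nonneg_right _ (hp0 j)
    linarith [abs_nonneg μ]
  -- finite partial-sum identities
  have icc_top : ∀ a b : ℤ, a ≤ b + 1 →
      Finset.Icc a (b+1) = insert (b+1) (Finset.Icc a b) := by
    intro a b h; ext x; simp only [Finset.mem_Icc, Finset.mem_insert]; omega
  have icc_bot : ∀ a b : ℤ, a - 1 ≤ b →
      Finset.Icc (a-1) b = insert (a-1) (Finset.Icc a b) := by
    intro a b h; ext x; simp only [Finset.mem_Icc, Finset.mem_insert]; omega
  have hU : ∀ n : ℕ, ∑ j ∈ Finset.Icc κ (κ + (n:ℤ)), q j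
      = (σ2 + μ - κ + 1) * p (κ - 1) - σ2 * p (κ + n) := by
    intro n
    induction n with
    | zero =>
      simp only [Nat.cast_zero, add_zero, Finset.Icc_self, Finset.sum_singleton]
      have : q κ = ((κ:ℝ) - μ) * p κ := rfl
      rw [this]
      linarith [hrec_mid]
    | succ n ih =>
      have hstep := hrec_up (κ + n + 1) (by omega)
      rw [show (κ + (n : ℤ) + 1) - 1 = κ + n from by ring] at hstep
      push_cast at hstep
      rw [show (κ + ((n:ℕ)+1 : ℕ) : ℤ) = (κ + n) + 1 from by push_cast; ring]
      rw [icc_top κ (κ + n) (by omega), Finset.sum_insert (by simp only [Finset.mem_Icc]; omega)]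
      rw [ih]
      have : q (κ + (n:ℤ) + 1) = ((κ:ℝ) + n + 1 - μ) * p (κ + n + 1) := by
        rw [hqdef]; push_cast; ring_nf
      rw [this]
      linarith [hstep]
  have hD : ∀ n : ℕ, ∑ j ∈ Finset.Icc (κ - 1 - (n:ℤ)) (κ - 1), q j
      = σ2 * p (κ - 1 - n) - (σ2 + μ - κ + 1) * p (κ - 1) := by
    intro n
    induction n with
    | zero =>
      simp only [Nat.cast_zero, sub_zero, Finset.Icc_self, Finset.sum_singleton]
      have : q (κ - 1) = ((κ:ℝ) - 1 - μ) * p (κ - 1) := by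
        rw [hqdef]; push_cast; ring_nf
      rw [this]
      ring
    | succ n ih =>
      have hstep := hrec_down (κ - 1 - n) (by omega)
      push_cast at hstep
      rw [show (κ - 1 - ((n:ℕ)+1 : ℕ) : ℤ) = (κ - 1 - n) - 1 from by push_cast; ring]
      rw [icc_bot (κ - 1 - n) (κ - 1) (by omega),
        Finset.sum_insert (by simp only [Finset.mem_Icc]; omega)]
      rw [ih]
      have : q (κ - 1 - (n:ℤ) - 1) = ((κ:ℝ) - 1 - n - 1 - μ) * p (κ - 1 - n - 1) := by
        rw [hqdef]; push_cast; ring_nf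
      rw [this]
      nlinarith [hstep]
  have hT : ∀ n : ℕ, ∑ j ∈ Finset.Icc (κ - 1 - (n:ℤ)) (κ + (n:ℤ)), q j
      = σ2 * (p (κ - 1 - n) - p (κ + n)) := by
    intro n
    have hsplit : Finset.Icc (κ - 1 - (n:ℤ)) (κ + (n:ℤ))
        = Finset.Icc (κ - 1 - (n:ℤ)) (κ - 1) ∪ Finset.Icc κ (κ + (n:ℤ)) := by
      ext x; simp only [Finset.mem_Icc, Finset.mem_union]; omega
    rw [hsplit, Finset.sum_union (by
      rw [Finset.disjoint_left]
      intro x hx hx'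
      simp only [Finset.mem_Icc] at hx hx'
      omega)]
    rw [hU n, hD n]
    ring
  -- tsum q = 0 via the exhaustion Icc (κ-1-n) (κ+n)
  have hup0 : Tendsto (fun n : ℕ => p (κ + n)) atTop (nhds 0) := by
    have hinj : Function.Injective (fun n : ℕ => κ + (n:ℤ)) := by
      intro a b h; simp only at h; omega
    exact (hp_sum.comp_injective hinj).tendsto_atTop_zero
  have hdown0 : Tendsto (fun n : ℕ => p (κ - 1 - n)) atTop (nhds 0) := by
    have hinj : Function.Injective (fun n : ℕ => κ - 1 - (n:ℤ)) := by
      intro a b h; simp only at h; omega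
    exact (hp_sum.comp_injective hinj).tendsto_atTop_zero
  have hF : Tendsto (fun n : ℕ => Finset.Icc (κ - 1 - (n:ℤ)) (κ + (n:ℤ))) atTop atTop := by
    apply tendsto_atTop_finset_of_monotone
    · intro m n hmn
      apply Finset.Icc_subset_Icc <;> omega
    · intro x
      refine ⟨x.natAbs + κ.natAbs + 1, ?_⟩
      simp only [Finset.mem_Icc]
      omega
  have hlim1 : Tendsto (fun n : ℕ => ∑ j ∈ Finset.Icc (κ - 1 - (n:ℤ)) (κ + (n:ℤ)), q j)
      atTop (nhds (∑' j, q j)) := hq_sum.hasSum.comp hF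
  have hlim2 : Tendsto (fun n : ℕ => ∑ j ∈ Finset.Icc (κ - 1 - (n:ℤ)) (κ + (n:ℤ)), q j)
      atTop (nhds 0) := by
    have : Tendsto (fun n : ℕ => σ2 * (p (κ - 1 - n) - p (κ + n))) atTop (nhds (σ2 * (0 - 0))) :=
      (hdown0.sub hup0).const_mul σ2
    rw [show σ2 * ((0:ℝ) - 0) = 0 from by ring] at this
    exact this.congr fun n => (hT n).symm
  have hq0 : ∑' j, q j = 0 := tendsto_nhds_unique hlim1 hlim2
  -- measurability / integrability
  have hmZ : Measurable (fun j : ℤ => (j : ℝ)) := measurable_from_top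
  have hmSR : Measurable (fun ω => ((S ω : ℤ) : ℝ)) := hmZ.comp hS
  have hν : ∀ j : ℤ, Measure.map S P {j} = P {ω | S ω = j} := by
    intro j
    rw [Measure.map_apply hS (measurableSet_singleton j)]
    rfl
  have hInt : Integrable (fun ω => ((S ω : ℤ) : ℝ)) P := by
    refine ⟨hmSR.aestronglyMeasurable, ?_⟩
    rw [HasFiniteIntegral]
    have heq1 : ∫⁻ ω, ‖((S ω : ℤ) : ℝ)‖₊ ∂P = ∑' j : ℤ, ‖((j:ℤ):ℝ)‖₊ * P {ω | S ω = j} := by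
      rw [← lintegral_map (f := fun j : ℤ => (‖((j:ℤ):ℝ)‖₊ : ENNReal)) measurable_from_top hS,
        lintegral_countable']
      exact tsum_congr fun j => by rw [hν j]
    change ∫⁻ ω, (‖((S ω : ℤ) : ℝ)‖₊ : ENNReal) ∂P < ⊤
    rw [heq1]
    have heq2 : ∀ j : ℤ, (‖((j:ℤ):ℝ)‖₊ : ENNReal) * P {ω | S ω = j}
        = ENNReal.ofReal (|(j:ℝ)| * p j) := by
      intro j
      rw [← ENNReal.ofReal_toReal (hPne j), ← enorm_eq_nnnorm, ← ofReal_norm,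
        ← ENNReal.ofReal_mul (norm_nonneg _)]
      congr 1
    rw [tsum_congr heq2, ← ENNReal.ofReal_tsum_of_nonneg (fun j => by positivity) habs]
    exact ENNReal.ofReal_lt_top
  have hIntMap : Integrable (fun j : ℤ => (j : ℝ)) (Measure.map S P) :=
    (integrable_map_measure hmZ.aestronglyMeasurable hS.aemeasurable).2 hInt
  -- conclude
  calc ∫ ω, ((S ω : ℤ) : ℝ) ∂P
      = ∫ j : ℤ, (j : ℝ) ∂(Measure.map S P) :=
        (integral_map hS.aemeasurable hmZ.aestronglyMeasurable).symm
    _ = ∑' j : ℤ, (Measure.map S P {j}).toReal • (j : ℝ) := integral_countable' hIntMap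
    _ = ∑' j : ℤ, (q j + μ * p j) := by
        refine tsum_congr fun j => ?_
        rw [hν j, smul_eq_mul, hqdef]
        show p j * (j:ℝ) = ((j:ℝ) - μ) * p j + μ * p j
        ring
    _ = (∑' j, q j) + ∑' j, μ * p j := hq_sum.tsum_add (hp_sum.mul_left μ)
    _ = μ := by
        rw [hq0, tsum_mul_left, hp_tsum]
        ring
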